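/- Let S be a sub-join-semilattice of a finite join-semilattice T and let F be a prime filter of S. Then T \ ↓(S \ F) is a prime filter of T extending F, where ↓X denotes the downward closure of X in T. -/
import Mathlib

/-- If `S` is a sub-join-semilattice of a finite join-semilattice `T` and `F` a prime
filter of `S`, then `T \ ↓(S \ F)` is a prime filter of `T` extending `F`. -/
theorem primeFilter_extension {T : Type*} [SemilatticeSup T] [OrderBot T] [Fintype T]
    (S : Set T)
    (hbot : (⊥ : T) ∈ S) (hsup : ∀ a ∈ S, ∀ b ∈ S, a ⊔ b ∈ S)
    (F : Set T) (hFS : F ⊆ S)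
    (hup : ∀ a ∈ F, ∀ b ∈ S, a ≤ b → b ∈ F)
    (hprime : ∀ X : Finset T, ↑X ⊆ S → X.sup id ∈ F → ∃ x ∈ X, x ∈ F) :
    (∀ a ∈ {t : T | ∃ x ∈ S \ F, t ≤ x}ᶜ, ∀ b : T, a ≤ b → b ∈ {t : T | ∃ x ∈ S \ F, t ≤ x}ᶜ) ∧
    (∀ X : Finset T, X.sup id ∈ {t : T | ∃ x ∈ S \ F, t ≤ x}ᶜ →
      ∃ x ∈ X, x ∈ {t : T | ∃ x' ∈ S \ F, t ≤ x'}ᶜ) ∧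
    (∀ s ∈ S, (s ∈ {t : T | ∃ x ∈ S \ F, t ≤ x}ᶜ ↔ s ∈ F)) := by
  classical
  refine ⟨?_, ?_, ?_⟩
  · intro a ha b hab hb
    obtain ⟨x, hx, hbx⟩ := hb
    exact ha ⟨x, hx, hab.trans hbx⟩
  · intro X hX
    by_contra h
    push_neg at h
    apply hX
    -- every x ∈ X is below some element of S \ F
    set g : T → T := fun t =>
      if h : ∃ s ∈ S \ F, t ≤ s then h.choose else ⊥ with hg
    have hgP : ∀ x ∈ X, g x ∈ S \ F ∧ x ≤ g x := by
      intro x hx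
      have hx' := h x hx
      simp only [Set.notMem_compl_iff, Set.mem_setOf_eq] at hx'
      rw [hg]
      simp only [dif_pos hx']
      obtain ⟨_, hm⟩ := hx'.choose_spec
      exact ⟨hx'.choose_spec.1, hm⟩
    set Y := X.image g with hY
    have hYS : ↑Y ⊆ S := by
      intro y hy
      simp only [hY, Finset.coe_image, Set.mem_image, Finset.mem_coe] at hy
      obtain ⟨x, hx, rfl⟩ := hy
      exact (hgP x hx).1.1
    have hYsupS : Y.sup id ∈ S := by
      refine Finset.sup_induction hbot (fun a ha b hb => hsup a ha b hb) ?_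
      intro y hy; exact hYS hy
    have hle : X.sup id ≤ Y.sup id := by
      apply Finset.sup_le
      intro x hx
      exact le_trans (hgP x hx).2 (Finset.le_sup (f := id) (Finset.mem_image_of_mem g hx))
    have hYF : Y.sup id ∉ F := by
      intro hF
      obtain ⟨y, hy, hyF⟩ := hprime Y hYS hF
      simp only [hY, Finset.mem_image] at hy
      obtain ⟨x, hx, rfl⟩ := hy
      exact (hgP x hx).1.2 hyF
    exact ⟨Y.sup id, ⟨hYsupS, hYF⟩, hle⟩
  · intro s hs
    constructor
    · intro hG
      by_contra hF
      exact hG ⟨s, ⟨hs, hF⟩, le_refl s⟩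
    · intro hF hG
      obtain ⟨x, ⟨hxS, hxF⟩, hsx⟩ := hG
      exact hxF (hup s hF x hxS hsx)
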